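/- Let E ⊂ ℝ^d be a set such that for every η ∈ (0,1) satisfying a given inequality (namely η log λ / 2 > quantity depending on k), E admits, for every N₀, a cover by at most A·B^{m+1}·e^{cN} balls of radius D·λ^{−N} for each N ≥ N₀ and each integer B ≥ 2 (summed over B and N ≥ N₀ + ⌊Υ log B⌋), where c < η log λ / 2 and Υ η log λ / 2 > m + 2. Then the η-dimensional Hausdorff measure of E is zero, hence dim_H(E) ≤ η. -/

import Mathlib

open MeasureTheory Set
open scoped ENNReal NNReal

/-- Covering estimate implying vanishing Hausdorff measure and a dimension bound. -/
theorem stmt9 (d m : ℕ) (E : Set (EuclideanSpace ℝ (Fin d)))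
    (lam A D c Υ η : ℝ) (hlam : 1 < lam) (hA : 0 < A) (hD : 0 < D) (hc : 0 < c)
    (hΥ : 0 < Υ) (hη : 0 < η ∧ η < 1)
    (hcη : c < η * Real.log lam / 2)
    (hΥη : (m : ℝ) + 2 < Υ * η * Real.log lam / 2)
    (hcover : ∀ N₀ : ℕ, ∃ t : ℕ → ℕ → Finset (EuclideanSpace ℝ (Fin d)),
      (∀ B N : ℕ, ((t B N).card : ℝ) ≤ A * (B : ℝ) ^ (m + 1) * Real.exp (c * N)) ∧
      E ⊆ ⋃ B : ℕ, ⋃ (_ : 2 ≤ B), ⋃ N : ℕ,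
            ⋃ (_ : N₀ + ⌊Υ * Real.log B⌋₊ ≤ N), ⋃ x ∈ t B N,
              Metric.closedBall x (D * lam ^ (-(N : ℝ)))) :
    μH[η] E = 0 ∧ dimH E ≤ ENNReal.ofReal η := by
  obtain ⟨hη0, hη1⟩ := hη
  have hlam0 : (0:ℝ) < lam := lt_trans one_pos hlam
  have hlog : 0 < Real.log lam := Real.log_pos hlam
  set L : ℝ := η * Real.log lam with hLdef
  have hL : 0 < L := mul_pos hη0 hlog
  set a : ℝ := L - c with hadef
  have haL : L / 2 < a := by simp only [hadef]; linarith
  have ha : 0 < a := by linarith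
  set q : ℝ := Real.exp (-a) with hqdef
  have hq0 : 0 < q := Real.exp_pos _
  have hq1 : q < 1 := by
    rw [hqdef, ← Real.exp_zero]
    exact Real.exp_lt_exp.mpr (by linarith)
  set Q : ℝ≥0∞ := ENNReal.ofReal q with hQdef
  have hQ1 : Q < 1 := by
    rw [hQdef, ← ENNReal.ofReal_one]
    exact (ENNReal.ofReal_lt_ofReal_iff one_pos).mpr hq1
  -- geometric tail
  have geom : ∀ K : ℕ, (∑' N : ℕ, if K ≤ N then Q ^ N else 0) = Q ^ K * (1 - Q)⁻¹ := by
    intro K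
    have hinj : Function.Injective (fun j : ℕ => K + j) := add_right_injective K
    have h0 : Function.support (fun N : ℕ => if K ≤ N then Q ^ N else 0) ⊆
        Set.range (fun j : ℕ => K + j) := by
      intro N hN
      by_cases hKN : K ≤ N
      · exact ⟨N - K, by simpa using Nat.add_sub_cancel' hKN⟩
      · exact absurd (if_neg hKN) hN
    rw [← hinj.tsum_eq h0]
    calc (∑' j : ℕ, if K ≤ K + j then Q ^ (K + j) else 0)
        = ∑' j : ℕ, Q ^ K * Q ^ j := by
          refine tsum_congr fun j => ?_
          rw [if_pos (Nat.le_add_right _ _), pow_add]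
      _ = Q ^ K * (1 - Q)⁻¹ := by rw [ENNReal.tsum_mul_left, ENNReal.tsum_geometric]
  have hrpow_pos : ∀ N : ℕ, (0:ℝ) < lam ^ (-(N:ℝ)) := fun N => Real.rpow_pos_of_pos hlam0 _
  have h2D : (0:ℝ) < 2 * D := by linarith
  -- key real computation
  have keyreal : ∀ B N : ℕ, (A * (B:ℝ) ^ (m+1) * Real.exp (c * N)) *
      (2 * (D * lam ^ (-(N:ℝ)))) ^ η = (A * (2*D) ^ η * (B:ℝ) ^ (m+1)) * q ^ N := by
    intro B N
    have h1 : (2 * (D * lam ^ (-(N:ℝ)))) = (2*D) * lam ^ (-(N:ℝ)) := by ring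
    have h2 : (lam ^ (-(N:ℝ))) ^ η = Real.exp (-(L * N)) := by
      rw [Real.rpow_def_of_pos hlam0, ← Real.exp_mul]
      congr 1
      rw [hLdef]; ring
    have h3 : q ^ N = Real.exp (-(a * (N:ℝ))) := by
      rw [hqdef, ← Real.exp_nat_mul]
      congr 1; ring
    have h4 : Real.exp (c * N) * Real.exp (-(L * N)) = Real.exp (-(a * (N:ℝ))) := by
      rw [← Real.exp_add]; congr 1; rw [hadef]; ring
    rw [h1, Real.mul_rpow h2D.le (hrpow_pos N).le, h2, h3, ← h4]
    ring
  -- choose covers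
  choose T hTcard hTcover using hcover
  set M : ℕ → ℕ := fun B => ⌊Υ * Real.log B⌋₊ with hMdef
  let ι : ℕ → Type := fun n => Σ B : ℕ, Σ N : ℕ, {x // x ∈ T n B N}
  haveI : ∀ n, Countable (ι n) := fun n => by unfold ι; infer_instance
  let U : ∀ n : ℕ, ι n → Set (EuclideanSpace ℝ (Fin d)) := fun n i =>
    if 2 ≤ i.1 ∧ n + M i.1 ≤ i.2.1 then
      Metric.closedBall i.2.2.1 (D * lam ^ (-(i.2.1:ℝ))) else ∅
  set r : ℕ → ℝ≥0∞ := fun n => ENNReal.ofReal (2 * (D * lam ^ (-(n:ℝ)))) with hrdef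
  -- radii tend to zero
  have hr : Filter.Tendsto r Filter.atTop (nhds 0) := by
    have h1 : ∀ n : ℕ, lam ^ (-(n:ℝ)) = (lam⁻¹) ^ n := by
      intro n
      rw [Real.rpow_neg hlam0.le, Real.rpow_natCast, inv_pow]
    have h2 : Filter.Tendsto (fun n : ℕ => (lam⁻¹) ^ n) Filter.atTop (nhds 0) :=
      tendsto_pow_atTop_nhds_zero_of_lt_one (inv_nonneg.mpr hlam0.le) (inv_lt_one_of_one_lt₀ hlam)
    have h3 : Filter.Tendsto (fun n : ℕ => 2 * (D * lam ^ (-(n:ℝ)))) Filter.atTop (nhds 0) := by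
      simp only [h1]
      have := (h2.const_mul D).const_mul 2
      simpa using this
    have := ENNReal.tendsto_ofReal h3
    simpa [hrdef] using this
  -- diameter bound
  have ht : ∀ n : ℕ, ∀ i : ι n, EMetric.diam (U n i) ≤ r n := by
    intro n ⟨B, N, x⟩
    by_cases hcond : 2 ≤ B ∧ n + M B ≤ N
    · have hU : U n ⟨B, N, x⟩ = Metric.closedBall x.1 (D * lam ^ (-(N:ℝ))) := if_pos hcond
      rw [hU]
      have hrad : (0:ℝ) ≤ D * lam ^ (-(N:ℝ)) := le_of_lt (mul_pos hD (hrpow_pos N))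
      calc EMetric.diam (Metric.closedBall x.1 (D * lam ^ (-(N:ℝ))))
          ≤ 2 * ENNReal.ofReal (D * lam ^ (-(N:ℝ))) := by
            rw [← Metric.emetric_closedBall hrad]
            exact EMetric.diam_closedBall
        _ = ENNReal.ofReal (2 * (D * lam ^ (-(N:ℝ)))) := by
            rw [ENNReal.ofReal_mul (by norm_num : (0:ℝ) ≤ 2), ENNReal.ofReal_ofNat]
        _ ≤ r n := by
            refine ENNReal.ofReal_le_ofReal ?_
            have hnN : (n:ℝ) ≤ N := by exact_mod_cast le_trans (Nat.le_add_right _ _) hcond.2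
            have : lam ^ (-(N:ℝ)) ≤ lam ^ (-(n:ℝ)) :=
              (Real.rpow_le_rpow_left_iff hlam).mpr (by linarith)
            nlinarith
    · have hU : U n ⟨B, N, x⟩ = ∅ := if_neg hcond
      rw [hU, EMetric.diam, EMetric.diam_empty]
      exact zero_le
  -- covering
  have hst : ∀ n : ℕ, E ⊆ ⋃ i : ι n, U n i := by
    intro n z hz
    have := hTcover n hz
    simp only [Set.mem_iUnion] at this
    obtain ⟨B, hB, N, hN, y, hy, hmem⟩ := this
    refine Set.mem_iUnion.mpr ⟨⟨B, N, ⟨y, hy⟩⟩, ?_⟩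
    have hU : U n ⟨B, N, ⟨y, hy⟩⟩ = Metric.closedBall y (D * lam ^ (-(N:ℝ))) :=
      if_pos ⟨hB, hN⟩
    rw [hU]
    exact hmem
  -- per (B,N) sum bound
  set CB : ℕ → ℝ≥0∞ := fun B => ENNReal.ofReal (A * (2*D) ^ η * (B:ℝ) ^ (m+1)) with hCBdef
  have hinner : ∀ n B N : ℕ,
      (∑' x : {x // x ∈ T n B N}, EMetric.diam (U n ⟨B, N, x⟩) ^ η) ≤
        if 2 ≤ B ∧ n + M B ≤ N then CB B * Q ^ N else 0 := by
    intro n B N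
    by_cases hcond : 2 ≤ B ∧ n + M B ≤ N
    · rw [if_pos hcond]
      have hterm : ∀ x : {x // x ∈ T n B N},
          EMetric.diam (U n ⟨B, N, x⟩) ^ η ≤
            ENNReal.ofReal ((2 * (D * lam ^ (-(N:ℝ)))) ^ η) := by
        intro x
        have hU : U n ⟨B, N, x⟩ = Metric.closedBall x.1 (D * lam ^ (-(N:ℝ))) := if_pos hcond
        have hrad : (0:ℝ) ≤ D * lam ^ (-(N:ℝ)) := le_of_lt (mul_pos hD (hrpow_pos N))
        have hdiam : EMetric.diam (U n ⟨B, N, x⟩) ≤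
            ENNReal.ofReal (2 * (D * lam ^ (-(N:ℝ)))) := by
          rw [hU, ← Metric.emetric_closedBall hrad]
          calc EMetric.diam (EMetric.closedBall x.1 (ENNReal.ofReal (D * lam ^ (-(N:ℝ)))))
              ≤ 2 * ENNReal.ofReal (D * lam ^ (-(N:ℝ))) := EMetric.diam_closedBall
            _ = ENNReal.ofReal (2 * (D * lam ^ (-(N:ℝ)))) := by
                rw [ENNReal.ofReal_mul (by norm_num : (0:ℝ) ≤ 2), ENNReal.ofReal_ofNat]
        calc EMetric.diam (U n ⟨B, N, x⟩) ^ η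
            ≤ (ENNReal.ofReal (2 * (D * lam ^ (-(N:ℝ))))) ^ η :=
              ENNReal.rpow_le_rpow hdiam hη0.le
          _ = ENNReal.ofReal ((2 * (D * lam ^ (-(N:ℝ)))) ^ η) :=
              ENNReal.ofReal_rpow_of_pos (by positivity)
      calc (∑' x : {x // x ∈ T n B N}, EMetric.diam (U n ⟨B, N, x⟩) ^ η)
          ≤ ∑' _ : {x // x ∈ T n B N}, ENNReal.ofReal ((2 * (D * lam ^ (-(N:ℝ)))) ^ η) :=
            ENNReal.tsum_le_tsum hterm
        _ = ((T n B N).card : ℝ≥0∞) * ENNReal.ofReal ((2 * (D * lam ^ (-(N:ℝ)))) ^ η) := by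
            rw [tsum_fintype]
            simp [Finset.sum_const, Fintype.card_coe, nsmul_eq_mul]
        _ ≤ ENNReal.ofReal (A * (B:ℝ) ^ (m+1) * Real.exp (c * N)) *
              ENNReal.ofReal ((2 * (D * lam ^ (-(N:ℝ)))) ^ η) := by
            gcongr
            rw [show (((T n B N).card : ℝ≥0∞)) = ENNReal.ofReal ((T n B N).card : ℝ) by
              simp [ENNReal.ofReal_natCast]]
            exact ENNReal.ofReal_le_ofReal (hTcard n B N)
        _ = CB B * Q ^ N := by
            rw [← ENNReal.ofReal_mul (by positivity), keyreal B N, hCBdef,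
              ENNReal.ofReal_mul (by positivity), hQdef, ← ENNReal.ofReal_pow hq0.le]
    · rw [if_neg hcond]
      have : ∀ x : {x // x ∈ T n B N}, EMetric.diam (U n ⟨B, N, x⟩) ^ η = 0 := by
        intro x
        have hU : U n ⟨B, N, x⟩ = ∅ := if_neg hcond
        rw [hU, EMetric.diam, EMetric.diam_empty, ENNReal.zero_rpow_of_pos hη0]
      simp [this]
  -- main sum bound
  have hS : ∀ n : ℕ, (∑' i : ι n, EMetric.diam (U n i) ^ η) ≤
      ((1 - Q)⁻¹ * ∑' B : ℕ, (if 2 ≤ B then CB B * Q ^ (M B) else 0)) * Q ^ n := by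
    intro n
    calc (∑' i : ι n, EMetric.diam (U n i) ^ η)
        = ∑' B : ℕ, ∑' p : Σ N : ℕ, {x // x ∈ T n B N},
            EMetric.diam (U n ⟨B, p.1, p.2⟩) ^ η := by
          rw [ENNReal.tsum_sigma']
      _ = ∑' B : ℕ, ∑' N : ℕ, ∑' x : {x // x ∈ T n B N},
            EMetric.diam (U n ⟨B, N, x⟩) ^ η := by
          refine tsum_congr fun B => ?_
          rw [ENNReal.tsum_sigma']
      _ ≤ ∑' B : ℕ, ∑' N : ℕ, (if 2 ≤ B ∧ n + M B ≤ N then CB B * Q ^ N else 0) :=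
          ENNReal.tsum_le_tsum fun B => ENNReal.tsum_le_tsum fun N => hinner n B N
      _ = ∑' B : ℕ, (if 2 ≤ B then CB B * (Q ^ (n + M B) * (1 - Q)⁻¹) else 0) := by
          refine tsum_congr fun B => ?_
          by_cases hB : 2 ≤ B
          · rw [if_pos hB]
            calc (∑' N : ℕ, if 2 ≤ B ∧ n + M B ≤ N then CB B * Q ^ N else 0)
                = ∑' N : ℕ, CB B * (if n + M B ≤ N then Q ^ N else 0) := by
                  refine tsum_congr fun N => ?_
                  by_cases hN : n + M B ≤ N
                  · rw [if_pos ⟨hB, hN⟩, if_pos hN]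
                  · rw [if_neg (fun h => hN h.2), if_neg hN, mul_zero]
              _ = CB B * (Q ^ (n + M B) * (1 - Q)⁻¹) := by
                  rw [ENNReal.tsum_mul_left, geom (n + M B)]
          · rw [if_neg hB]
            refine (ENNReal.summable.tsum_eq_zero_iff).mpr fun N => ?_
            rw [if_neg (fun h => hB h.1)]
      _ = ((1 - Q)⁻¹ * ∑' B : ℕ, (if 2 ≤ B then CB B * Q ^ (M B) else 0)) * Q ^ n := by
          rw [mul_comm ((1:ℝ≥0∞) - Q)⁻¹, ← ENNReal.tsum_mul_right, ← ENNReal.tsum_mul_right]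
          refine tsum_congr fun B => ?_
          by_cases hB : 2 ≤ B
          · rw [if_pos hB, if_pos hB, pow_add]
            ring
          · rw [if_neg hB, if_neg hB, zero_mul, zero_mul]
  -- the B-series is finite
  set p : ℝ := a * Υ - (m + 1) with hpdef
  have hp : (1:ℝ) < p := by
    have h1 : Υ * η * Real.log lam / 2 = Υ * (L / 2) := by rw [hLdef]; ring
    have h2 : Υ * (L / 2) < Υ * a := by
      exact mul_lt_mul_of_pos_left haL hΥ
    have : (m:ℝ) + 2 < a * Υ := by rw [mul_comm]; calc (m:ℝ) + 2 < Υ * (L/2) := by rw [← h1]; exact hΥη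
                                                        _ < Υ * a := h2
    rw [hpdef]; linarith
  set K : ℝ := A * (2*D) ^ η * Real.exp a with hKdef
  have hK0 : 0 < K := by rw [hKdef]; positivity
  have hTBfin : (∑' B : ℕ, (if 2 ≤ B then CB B * Q ^ (M B) else 0)) ≠ ⊤ := by
    have hbound : ∀ B : ℕ, (if 2 ≤ B then CB B * Q ^ (M B) else 0) ≤
        ENNReal.ofReal (K * (B:ℝ) ^ (-p)) := by
      intro B
      by_cases hB : 2 ≤ B
      · rw [if_pos hB]
        have hB0 : (0:ℝ) < B := by
          have : (2:ℝ) ≤ B := by exact_mod_cast hB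
          linarith
        have hfloor : Υ * Real.log B - 1 < (M B : ℝ) := by
          rw [hMdef]; exact Nat.sub_one_lt_floor _
        have hqM : q ^ (M B) ≤ Real.exp a * (B:ℝ) ^ (-(a*Υ)) := by
          have h1 : q ^ (M B) = Real.exp (-(a * (M B : ℝ))) := by
            rw [hqdef, ← Real.exp_nat_mul]; congr 1; ring
          have h2 : -(a * (M B : ℝ)) ≤ a - a * Υ * Real.log B := by nlinarith
          rw [h1]
          calc Real.exp (-(a * (M B:ℝ))) ≤ Real.exp (a - a*Υ*Real.log B) :=
                Real.exp_le_exp.mpr h2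
            _ = Real.exp a * (B:ℝ) ^ (-(a*Υ)) := by
                rw [Real.rpow_def_of_pos hB0, ← Real.exp_add]; congr 1; ring
        have hmain : A * (2*D)^η * (B:ℝ)^(m+1) * q^(M B) ≤ K * (B:ℝ)^(-p) := by
          have hA2D : (0:ℝ) < A * (2*D)^η := by positivity
          have step : (B:ℝ)^(m+1) * q^(M B) ≤ Real.exp a * (B:ℝ)^(-p) := by
            have h3 : (B:ℝ)^(m+1) * ((B:ℝ) ^ (-(a*Υ))) = (B:ℝ)^(-p) := by
              rw [← Real.rpow_natCast (B:ℝ) (m+1), ← Real.rpow_add hB0]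
              congr 1
              rw [hpdef]
              push_cast
              ring
            calc (B:ℝ)^(m+1) * q^(M B)
                ≤ (B:ℝ)^(m+1) * (Real.exp a * (B:ℝ)^(-(a*Υ))) :=
                  mul_le_mul_of_nonneg_left hqM (by positivity)
              _ = Real.exp a * ((B:ℝ)^(m+1) * (B:ℝ)^(-(a*Υ))) := by ring
              _ = Real.exp a * (B:ℝ)^(-p) := by rw [h3]
          calc A * (2*D)^η * (B:ℝ)^(m+1) * q^(M B)
              = (A * (2*D)^η) * ((B:ℝ)^(m+1) * q^(M B)) := by ring
            _ ≤ (A * (2*D)^η) * (Real.exp a * (B:ℝ)^(-p)) :=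
                mul_le_mul_of_nonneg_left step hA2D.le
            _ = K * (B:ℝ)^(-p) := by rw [hKdef]; ring
        calc CB B * Q ^ (M B)
            = ENNReal.ofReal (A * (2*D)^η * (B:ℝ)^(m+1) * q^(M B)) := by
              rw [hCBdef, hQdef, ← ENNReal.ofReal_pow hq0.le,
                ← ENNReal.ofReal_mul (by positivity)]
          _ ≤ ENNReal.ofReal (K * (B:ℝ)^(-p)) := ENNReal.ofReal_le_ofReal hmain
      · rw [if_neg hB]
        exact zero_le
    have hsum : Summable (fun B : ℕ => K * (B:ℝ) ^ (-p)) :=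
      (Real.summable_nat_rpow.mpr (by linarith : -p < -1)).mul_left K
    have hle : (∑' B : ℕ, (if 2 ≤ B then CB B * Q ^ (M B) else 0)) ≤
        ∑' B : ℕ, ENNReal.ofReal (K * (B:ℝ)^(-p)) := ENNReal.tsum_le_tsum hbound
    have heq : (∑' B : ℕ, ENNReal.ofReal (K * (B:ℝ)^(-p))) =
        ENNReal.ofReal (∑' B : ℕ, K * (B:ℝ)^(-p)) :=
      (ENNReal.ofReal_tsum_of_nonneg
        (fun B => mul_nonneg hK0.le (Real.rpow_nonneg (Nat.cast_nonneg B) _)) hsum).symm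
    exact ne_top_of_le_ne_top (by rw [heq]; exact ENNReal.ofReal_ne_top) hle
  -- constant is finite
  have hCne : ((1 - Q)⁻¹ * ∑' B : ℕ, (if 2 ≤ B then CB B * Q ^ (M B) else 0)) ≠ ⊤ := by
    apply ENNReal.mul_ne_top
    · exact ENNReal.inv_ne_top.mpr (fun h => (tsub_eq_zero_iff_le.mp h).not_gt hQ1)
    · exact hTBfin
  -- Hausdorff measure vanishes
  have hmuzero : μH[η] E = 0 := by
    have hle := Measure.hausdorffMeasure_le_liminf_tsum (X := EuclideanSpace ℝ (Fin d)) η E r hr U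
      (Filter.Eventually.of_forall ht) (Filter.Eventually.of_forall hst)
    have hlim : Filter.Tendsto
        (fun n : ℕ => ((1 - Q)⁻¹ *
          ∑' B : ℕ, (if 2 ≤ B then CB B * Q ^ (M B) else 0)) * Q ^ n)
        Filter.atTop (nhds 0) := by
      have h1 := ENNReal.tendsto_pow_atTop_nhds_zero_of_lt_one hQ1
      have h2 := ENNReal.Tendsto.const_mul h1 (Or.inr hCne)
      simpa using h2
    have h3 : Filter.liminf
        (fun n : ℕ => ∑' i : ι n, EMetric.diam (U n i) ^ η) Filter.atTop ≤ 0 := by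
      calc Filter.liminf (fun n : ℕ => ∑' i : ι n, EMetric.diam (U n i) ^ η) Filter.atTop
          ≤ Filter.liminf (fun n : ℕ => ((1 - Q)⁻¹ *
              ∑' B : ℕ, (if 2 ≤ B then CB B * Q ^ (M B) else 0)) * Q ^ n) Filter.atTop :=
            Filter.liminf_le_liminf (Filter.Eventually.of_forall hS)
        _ = 0 := hlim.liminf_eq
    exact le_antisymm (le_trans hle h3) zero_le
  refine ⟨hmuzero, ?_⟩
  have hcoe : ((η.toNNReal : ℝ)) = η := Real.coe_toNNReal η hη0.le
  have hne : μH[((η.toNNReal : ℝ≥0) : ℝ)] E ≠ ⊤ := by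
    rw [hcoe, hmuzero]; exact ENNReal.zero_ne_top
  have hfin := dimH_le_of_hausdorffMeasure_ne_top hne
  simpa [ENNReal.ofReal] using hfin
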